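/- Let q ∈ Δ(X) with all entries positive, q_min = min_x q(x), ε ≥ 0, and f convex with f(1)=0 and f(0) finite. For any row-stochastic, ε-LDP matrix K with qK = q, sup_{p ∈ Δ(X)} D_f(p ‖ pK) ≥ ((1 − q_min)/(e^ε q_min + 1 − q_min)) f(0) + (e^ε q_min/(e^ε q_min + 1 − q_min)) f((e^ε q_min + 1 − q_min)/(e^ε q_min)). -/

import Mathlib

open Finset

/-- The `f`-divergence between distributions `p` and `r` on `Fin n`. -/
noncomputable def fDiv {n : ℕ} (f : ℝ → ℝ) (p r : Fin n → ℝ) : ℝ :=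
  ∑ x, r x * f (p x / r x)

/-- The output distribution `pK` of the mechanism `K` applied to `p`. -/
def push {n : ℕ} (p : Fin n → ℝ) (K : Matrix (Fin n) (Fin n) ℝ) : Fin n → ℝ :=
  fun j => ∑ i, p i * K i j

/-- Monotonicity of `x ↦ (1-x) f 0 + x f (1/x)` for convex `f`. -/
lemma g_mono_aux {f : ℝ → ℝ} (hconv : ConvexOn ℝ (Set.Ici (0:ℝ)) f)
    {x y : ℝ} (hx : 0 < x) (hxy : x ≤ y) :
    (1 - y) * f 0 + y * f (1/y) ≤ (1 - x) * f 0 + x * f (1/x) := by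
  have hy : 0 < y := hx.trans_le hxy
  have hw : 0 ≤ x / y := by positivity
  have hw1 : x / y ≤ 1 := (div_le_one hy).2 hxy
  have h := hconv.2 (Set.mem_Ici.2 le_rfl)
    (Set.mem_Ici.2 (by positivity : (0:ℝ) ≤ 1/x))
    (sub_nonneg.2 hw1) hw (by ring)
  simp only [smul_eq_mul] at h
  have harg : (1 - x/y) * (0:ℝ) + (x/y) * (1/x) = 1/y := by
    field_simp
    ring
  rw [harg] at h
  have h2 := mul_le_mul_of_nonneg_left h hy.le
  have e2 : y * ((1 - x / y) * f 0 + x / y * f (1/x)) = (y - x) * f 0 + x * f (1/x) := by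
    field_simp
    try ring
  rw [e2] at h2
  linarith

/-- Converse (lower) bound: for any row-stochastic ε-LDP mechanism `K` keeping `q` invariant,
the worst-case `f`-divergence `sup_p D_f(p ‖ pK)` is at least the claimed expression in
`q_min = min_x q(x)`. -/
theorem converse_lower_bound (n : ℕ) [NeZero n] (ε : ℝ) (hε : 0 ≤ ε)
    (f : ℝ → ℝ) (hconv : ConvexOn ℝ (Set.Ici (0:ℝ)) f) (hf1 : f 1 = 0)
    (q : Fin n → ℝ) (hqpos : ∀ i, 0 < q i) (hqsum : ∑ i, q i = 1)
    (K : Matrix (Fin n) (Fin n) ℝ)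
    (hKnn : ∀ i j, 0 ≤ K i j) (hKrow : ∀ i, ∑ j, K i j = 1)
    (hLDP : ∀ i j k, K i k ≤ Real.exp ε * K j k)
    (hinv : ∀ j, ∑ i, q i * K i j = q j) :
    (1 - Finset.univ.inf' Finset.univ_nonempty q) /
        (Real.exp ε * Finset.univ.inf' Finset.univ_nonempty q + 1 -
          Finset.univ.inf' Finset.univ_nonempty q) * f 0 +
      Real.exp ε * Finset.univ.inf' Finset.univ_nonempty q /
        (Real.exp ε * Finset.univ.inf' Finset.univ_nonempty q + 1 -
          Finset.univ.inf' Finset.univ_nonempty q) *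
        f ((Real.exp ε * Finset.univ.inf' Finset.univ_nonempty q + 1 -
            Finset.univ.inf' Finset.univ_nonempty q) /
          (Real.exp ε * Finset.univ.inf' Finset.univ_nonempty q)) ≤
    sSup {v : ℝ | ∃ p : Fin n → ℝ,
      (∀ i, 0 ≤ p i) ∧ ∑ i, p i = 1 ∧ v = fDiv f p (push p K)} := by
  classical
  set Q := Finset.univ.inf' Finset.univ_nonempty q with hQdef
  obtain ⟨m, -, hm⟩ := Finset.exists_mem_eq_inf' (Finset.univ_nonempty) q
  have hQm : Q = q m := hm
  have hQpos : 0 < Q := hQm ▸ hqpos m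
  have hQle : ∀ i, Q ≤ q i := fun i => Finset.inf'_le _ (Finset.mem_univ i)
  have hq1 : ∀ i, q i ≤ 1 := by
    intro i
    calc q i ≤ ∑ j, q j :=
          Finset.single_le_sum (fun j _ => (hqpos j).le) (Finset.mem_univ i)
      _ = 1 := hqsum
  have hQ1 : Q ≤ 1 := hQm ▸ hq1 m
  have hexp : 0 < Real.exp ε := Real.exp_pos ε
  set d : ℝ := Real.exp ε * Q + 1 - Q with hd_def
  have hdpos : 0 < d := by nlinarith
  set y : ℝ := Real.exp ε * Q / d with hy_def
  have hcol : ∀ i x, q x ≤ Real.exp ε * K i x := by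
    intro i x
    calc q x = ∑ j, q j * K j x := (hinv x).symm
      _ ≤ ∑ j, q j * (Real.exp ε * K i x) := by
          apply Finset.sum_le_sum
          intro j _
          exact mul_le_mul_of_nonneg_left (hLDP j i x) (hqpos j).le
      _ = Real.exp ε * K i x := by rw [← Finset.sum_mul, hqsum, one_mul]
  set x : ℝ := K m m with hx_def
  have hx_pos : 0 < x := by
    nlinarith [hcol m m, hqpos m, hexp, hKnn m m]
  -- the key upper bound on `K m m`
  have hxy : x ≤ y := by
    have hsum : q m = ∑ i, q i * K i m := (hinv m).symm
    have hsplit : ∑ i, q i * K i m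
        = q m * x + ∑ i ∈ Finset.univ.erase m, q i * K i m := by
      rw [← Finset.add_sum_erase _ _ (Finset.mem_univ m)]
    have hlb : ∀ i ∈ Finset.univ.erase m,
        q i * (Real.exp (-ε) * x) ≤ q i * K i m := by
      intro i _
      refine mul_le_mul_of_nonneg_left ?_ (hqpos i).le
      rw [Real.exp_neg, inv_mul_le_iff₀ hexp]
      exact hLDP m i m
    have herase : ∑ i ∈ Finset.univ.erase m, q i = 1 - q m := by
      rw [Finset.sum_erase_eq_sub (Finset.mem_univ m), hqsum]
    have h2 : (1 - q m) * (Real.exp (-ε) * x)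
        ≤ ∑ i ∈ Finset.univ.erase m, q i * K i m := by
      calc (1 - q m) * (Real.exp (-ε) * x)
          = ∑ i ∈ Finset.univ.erase m, q i * (Real.exp (-ε) * x) := by
            rw [← Finset.sum_mul, herase]
        _ ≤ _ := Finset.sum_le_sum hlb
    have hsum' : q m = q m * x + ∑ i ∈ Finset.univ.erase m, q i * K i m :=
      hsum.trans hsplit
    have h3 : q m * x + (1 - q m) * (Real.exp (-ε) * x) ≤ q m := by
      linarith
    rw [hy_def, le_div_iff₀ hdpos]
    have hee : Real.exp ε * Real.exp (-ε) = 1 := by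
      rw [← Real.exp_add]; simp
    have key : Real.exp ε * ((1 - q m) * (Real.exp (-ε) * x)) = (1 - q m) * x := by
      rw [show Real.exp ε * ((1 - q m) * (Real.exp (-ε) * x))
            = (Real.exp ε * Real.exp (-ε)) * ((1 - q m) * x) by ring, hee, one_mul]
    have h4 := mul_le_mul_of_nonneg_left h3 hexp.le
    rw [hd_def, hQm]
    nlinarith [h4, key]
  -- the witness distribution: point mass at `m`
  set p : Fin n → ℝ := fun i => if i = m then (1:ℝ) else 0 with hp_def
  have hp_nn : ∀ i, 0 ≤ p i := by
    intro i
    by_cases h : i = m <;> simp [hp_def, h]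
  have hp_sum : ∑ i, p i = 1 := by simp [hp_def]
  have hpush : ∀ j, push p K j = K m j := by
    intro j
    simp [push, hp_def, ite_mul, one_mul, zero_mul]
  have key : ∀ j, push p K j * f (p j / push p K j)
      = if j = m then x * f (1 / x) else K m j * f 0 := by
    intro j
    rw [hpush j]
    by_cases h : j = m
    · subst h
      simp [hp_def, hx_def]
    · simp [hp_def, h, zero_div]
  have hfdiv : fDiv f p (push p K) = (1 - x) * f 0 + x * f (1 / x) := by
    have h1 : fDiv f p (push p K)
        = x * f (1/x) + ∑ j ∈ Finset.univ.erase m, K m j * f 0 := by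
      unfold fDiv
      rw [← Finset.add_sum_erase _ _ (Finset.mem_univ m), key m, if_pos rfl]
      congr 1
      refine Finset.sum_congr rfl fun j hj => ?_
      rw [key j, if_neg (Finset.ne_of_mem_erase hj)]
    have h2 : ∑ j ∈ Finset.univ.erase m, K m j = 1 - x := by
      rw [Finset.sum_erase_eq_sub (Finset.mem_univ m), hKrow m]
    rw [h1, ← Finset.sum_mul, h2]
    ring
  have hmem : fDiv f p (push p K) ∈ {v : ℝ | ∃ p : Fin n → ℝ,
      (∀ i, 0 ≤ p i) ∧ ∑ i, p i = 1 ∧ v = fDiv f p (push p K)} :=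
    ⟨p, hp_nn, hp_sum, rfl⟩
  -- the set is bounded above
  set B : ℝ := max (max (f 0) (f (Real.exp ε / Q))) 0 with hB_def
  have hbdd : BddAbove {v : ℝ | ∃ p : Fin n → ℝ,
      (∀ i, 0 ≤ p i) ∧ ∑ i, p i = 1 ∧ v = fDiv f p (push p K)} := by
    refine ⟨B, ?_⟩
    rintro v ⟨r, hrnn, hrsum1, rfl⟩
    have hr : ∀ j, q j / Real.exp ε ≤ push r K j := by
      intro j
      calc q j / Real.exp ε = (∑ i, r i) * (q j / Real.exp ε) := by rw [hrsum1, one_mul]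
        _ = ∑ i, r i * (q j / Real.exp ε) := by rw [Finset.sum_mul]
        _ ≤ ∑ i, r i * K i j := by
            refine Finset.sum_le_sum fun i _ => mul_le_mul_of_nonneg_left ?_ (hrnn i)
            rw [div_le_iff₀ hexp]
            calc q j ≤ Real.exp ε * K i j := hcol i j
              _ = K i j * Real.exp ε := mul_comm _ _
        _ = push r K j := rfl
    have hrpos : ∀ j, 0 < push r K j := fun j =>
      lt_of_lt_of_le (div_pos (hqpos j) hexp) (hr j)
    have hrsum : ∑ j, push r K j = 1 := by
      unfold push
      rw [Finset.sum_comm]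
      calc ∑ i, ∑ j, r i * K i j = ∑ i, r i * ∑ j, K i j := by
            simp [Finset.mul_sum]
        _ = 1 := by
            simp only [hKrow, mul_one]
            exact hrsum1
    have hterm : ∀ j, push r K j * f (r j / push r K j) ≤ push r K j * B := by
      intro j
      refine mul_le_mul_of_nonneg_left ?_ (hrpos j).le
      have ht0 : 0 ≤ r j / push r K j := div_nonneg (hrnn j) (hrpos j).le
      have hT : (0:ℝ) ≤ Real.exp ε / Q := by positivity
      have htT : r j / push r K j ≤ Real.exp ε / Q := by
        rw [div_le_div_iff₀ (hrpos j) hQpos]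
        have h1 : r j ≤ 1 := by
          rw [← hrsum1]
          exact Finset.single_le_sum (fun i _ => hrnn i) (Finset.mem_univ j)
        have h1' : r j * Q ≤ 1 * Q := mul_le_mul_of_nonneg_right h1 hQpos.le
        have h4 : Real.exp ε * (q j / Real.exp ε) = q j := by field_simp
        have h5 := mul_le_mul_of_nonneg_left (hr j) hexp.le
        have h3 := hQle j
        linarith
      have hseg : r j / push r K j ∈ segment ℝ (0:ℝ) (Real.exp ε / Q) := by
        rw [segment_eq_Icc hT]
        exact ⟨ht0, htT⟩
      have := hconv.le_on_segment (Set.mem_Ici.2 le_rfl) (Set.mem_Ici.2 hT) hseg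
      exact this.trans (le_max_left _ _)
    calc fDiv f r (push r K) ≤ ∑ j, push r K j * B :=
          Finset.sum_le_sum fun j _ => hterm j
      _ = B := by rw [← Finset.sum_mul, hrsum, one_mul]
  -- assemble
  have hle := le_csSup hbdd hmem
  refine le_trans ?_ hle
  rw [hfdiv]
  have hgm := g_mono_aux hconv hx_pos hxy
  have hsum_d : (1 - Q) + Real.exp ε * Q = d := by rw [hd_def]; ring
  have e1 : (1 - Q) / d = 1 - y := by
    rw [hy_def, eq_sub_iff_add_eq, ← add_div, hsum_d, div_self hdpos.ne']
  have e2 : d / (Real.exp ε * Q) = 1 / y := by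
    rw [hy_def, one_div_div]
  rw [e1, e2]
  exact hgm
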